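/- arXiv:2106.14856 — 2 statements merged into one kernel-verified Lean document; each statement's English description precedes it below -/
import Mathlib

section
/- Every real number x has an F_{p^l}-continued fraction expansion: for every prime p and every l ∈ ℕ, there exist an integer b coprime to p and (finite or infinite) sequences of positive integers (a_i) and signs (ε_i) ∈ {1,−1} satisfying the F_{p^l}-continued fraction conditions such that the sequence of convergents p_n/q_n converges to x (and equals x at the last index in the finite case). -/
/-- A finite `F_N`-continued fraction `1/(0+) N/(b+) ε₁/(a₁+) ⋯ εₙ/(aₙ)` with `n`
partial quotients.  Indices are shifted by one: the field `p i` is the paper's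
`p_{i-1}`, so `p 0 = p₋₁ = 1`, `q 0 = q₋₁ = 0`, `p 1 = p₀ = b`, `q 1 = q₀ = N`,
and the paper's `i`-th convergent `p_i/q_i` is `p (i+1) / q (i+1)`. -/
structure FCF (N : ℕ) (n : ℕ) where
  b : ℤ
  a : ℕ → ℤ
  ε : ℕ → ℤ
  p : ℕ → ℤ
  q : ℕ → ℤ
  hb : IsCoprime b (N : ℤ)
  hp0 : p 0 = 1
  hq0 : q 0 = 0
  hp1 : p 1 = b
  hq1 : q 1 = N
  ha : ∀ i, 1 ≤ i → i ≤ n → 1 ≤ a i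
  hε : ∀ i, 1 ≤ i → i ≤ n → ε i = 1 ∨ ε i = -1
  hrecp : ∀ i, 1 ≤ i → i ≤ n → p (i + 1) = a i * p i + ε i * p (i - 1)
  hrecq : ∀ i, 1 ≤ i → i ≤ n → q (i + 1) = a i * q i + ε i * q (i - 1)
  cond1 : ∀ i, 1 ≤ i → i < n → 1 ≤ a i + ε (i + 1)
  cond2 : ∀ i, 1 ≤ i → i ≤ n → 1 ≤ a i + ε i
  cond3 : ∀ i, 1 ≤ i → i ≤ n → IsCoprime (p (i + 1)) (q (i + 1))

/-- An infinite `F_N`-continued fraction `1/(0+) N/(b+) ε₁/(a₁+) ε₂/(a₂+) ⋯`,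
with the same index shift as `FCF`: `p (i+1) / q (i+1)` is the paper's `i`-th
convergent `p_i/q_i`. -/
structure FCFInf (N : ℕ) where
  b : ℤ
  a : ℕ → ℤ
  ε : ℕ → ℤ
  p : ℕ → ℤ
  q : ℕ → ℤ
  hb : IsCoprime b (N : ℤ)
  hp0 : p 0 = 1
  hq0 : q 0 = 0
  hp1 : p 1 = b
  hq1 : q 1 = N
  ha : ∀ i, 1 ≤ i → 1 ≤ a i
  hε : ∀ i, 1 ≤ i → ε i = 1 ∨ ε i = -1
  hrecp : ∀ i, 1 ≤ i → p (i + 1) = a i * p i + ε i * p (i - 1)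
  hrecq : ∀ i, 1 ≤ i → q (i + 1) = a i * q i + ε i * q (i - 1)
  cond1 : ∀ i, 1 ≤ i → 1 ≤ a i + ε (i + 1)
  cond2 : ∀ i, 1 ≤ i → 1 ≤ a i + ε i
  cond3 : ∀ i, 1 ≤ i → IsCoprime (p (i + 1)) (q (i + 1))


open scoped Classical

/-- State of the F_N expansion algorithm. `pm,qm` = previous convergent,
`pc,qc` = current convergent, `e` = pending sign, `a` = last partial quotient,
`t` = current tail, `m` = mode (0 = active, 1 = chain, 2 = done). -/
structure FCFSt where
  pm : ℤ
  pc : ℤ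
  qm : ℤ
  qc : ℤ
  e  : ℤ
  a  : ℤ
  t  : ℝ
  m  : ℕ

noncomputable def FCFstep (pp : ℕ) (st : FCFSt) : FCFSt :=
  if st.m = 2 then
    { pm := st.pc, pc := 1 * st.pc + st.e * st.pm, qm := st.qc, qc := 1 * st.qc + st.e * st.qm,
      e := 1, a := 1, t := 0, m := 2 }
  else if st.m = 1 then
    { pm := st.pc, pc := 2 * st.pc + st.e * st.pm, qm := st.qc, qc := 2 * st.qc + st.e * st.qm,
      e := -1, a := 2, t := 1, m := 1 }
  else if hint : (⌊st.t⌋ : ℝ) = st.t then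
    if (pp : ℤ) ∣ (⌊st.t⌋ * st.pc + st.e * st.pm) ∧ (pp : ℤ) ∣ (⌊st.t⌋ * st.qc + st.e * st.qm) then
      { pm := st.pc, pc := (⌊st.t⌋ + 1) * st.pc + st.e * st.pm,
        qm := st.qc, qc := (⌊st.t⌋ + 1) * st.qc + st.e * st.qm,
        e := -1, a := ⌊st.t⌋ + 1, t := 1, m := 1 }
    else
      { pm := st.pc, pc := ⌊st.t⌋ * st.pc + st.e * st.pm,
        qm := st.qc, qc := ⌊st.t⌋ * st.qc + st.e * st.qm,
        e := 1, a := ⌊st.t⌋, t := 0, m := 2 }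
  else if st.e = -1 ∧ st.t < 2 then
    { pm := st.pc, pc := 2 * st.pc + st.e * st.pm, qm := st.qc, qc := 2 * st.qc + st.e * st.qm,
      e := -1, a := 2, t := 1 / (2 - st.t), m := 0 }
  else if (pp : ℤ) ∣ (⌊st.t⌋ * st.pc + st.e * st.pm) ∧ (pp : ℤ) ∣ (⌊st.t⌋ * st.qc + st.e * st.qm) then
    { pm := st.pc, pc := (⌊st.t⌋ + 1) * st.pc + st.e * st.pm,
      qm := st.qc, qc := (⌊st.t⌋ + 1) * st.qc + st.e * st.qm,
      e := -1, a := ⌊st.t⌋ + 1, t := 1 / ((⌊st.t⌋ : ℝ) + 1 - st.t), m := 0 }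
  else
    { pm := st.pc, pc := ⌊st.t⌋ * st.pc + st.e * st.pm,
      qm := st.qc, qc := ⌊st.t⌋ * st.qc + st.e * st.qm,
      e := 1, a := ⌊st.t⌋, t := 1 / (st.t - (⌊st.t⌋ : ℝ)), m := 0 }

/-- Termination condition: active, integer tail, and the terminating convergent is good. -/
def FCFTerm (pp : ℕ) (st : FCFSt) : Prop :=
  st.m = 0 ∧ (⌊st.t⌋ : ℝ) = st.t ∧
    ¬((pp : ℤ) ∣ (⌊st.t⌋ * st.pc + st.e * st.pm) ∧ (pp : ℤ) ∣ (⌊st.t⌋ * st.qc + st.e * st.qm))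

/-- Invariant for a live (non-done) state. -/
structure FCFInv (pp N : ℕ) (x : ℝ) (st : FCFSt) : Prop where
  hqm0 : 0 ≤ st.qm
  hqmc : st.qm ≤ st.qc
  hqc1 : 1 ≤ st.qc
  he : st.e = 1 ∨ st.e = -1
  hstrict : st.e = -1 → st.qm < st.qc
  hdet : st.pm * st.qc - st.pc * st.qm = (N : ℤ) ∨ st.pm * st.qc - st.pc * st.qm = -(N : ℤ)
  hgood : ¬((pp : ℤ) ∣ st.pc ∧ (pp : ℤ) ∣ st.qc)
  hdiv : st.m = 1 ∨ st.e = -1 →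
    (pp : ℤ) ∣ (st.pc + st.e * st.pm) ∧ (pp : ℤ) ∣ (st.qc + st.e * st.qm)
  hval : x * (st.t * (st.qc : ℝ) + (st.e : ℝ) * (st.qm : ℝ))
        = st.t * (st.pc : ℝ) + (st.e : ℝ) * (st.pm : ℝ)
  ht : st.m = 0 → 1 < st.t
  htc : st.m = 1 → st.t = 1
  hm : st.m = 0 ∨ st.m = 1

theorem FCFstep_pm (pp : ℕ) (st : FCFSt) : (FCFstep pp st).pm = st.pc := by
  unfold FCFstep; split_ifs <;> rfl

theorem FCFstep_qm (pp : ℕ) (st : FCFSt) : (FCFstep pp st).qm = st.qc := by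
  unfold FCFstep; split_ifs <;> rfl

theorem FCFstep_recp (pp : ℕ) (st : FCFSt) :
    (FCFstep pp st).pc = (FCFstep pp st).a * st.pc + st.e * st.pm := by
  unfold FCFstep; split_ifs <;> rfl

theorem FCFstep_recq (pp : ℕ) (st : FCFSt) :
    (FCFstep pp st).qc = (FCFstep pp st).a * st.qc + st.e * st.qm := by
  unfold FCFstep; split_ifs <;> rfl

theorem isCoprime_of_det (pp : ℕ) (hp : pp.Prime) (l : ℕ) (a b u v : ℤ)
    (h : u * b - a * v = (pp : ℤ) ^ l ∨ u * b - a * v = -((pp : ℤ) ^ l))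
    (hg : ¬((pp : ℤ) ∣ a ∧ (pp : ℤ) ∣ b)) : IsCoprime a b := by
  rw [Int.isCoprime_iff_gcd_eq_one]
  have hga : (Int.gcd a b : ℤ) ∣ a := Int.gcd_dvd_left a b
  have hgb : (Int.gcd a b : ℤ) ∣ b := Int.gcd_dvd_right a b
  have hd : (Int.gcd a b : ℤ) ∣ (pp : ℤ) ^ l := by
    have h1 : (Int.gcd a b : ℤ) ∣ u * b - a * v :=
      dvd_sub (hgb.mul_left u) (hga.mul_right v)
    rcases h with h | h
    · rwa [h] at h1
    · rw [h] at h1; exact (dvd_neg).mp h1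
  have hd' : Int.gcd a b ∣ pp ^ l := by exact_mod_cast hd
  rcases (Nat.dvd_prime_pow hp).mp hd' with ⟨k, _, hk⟩
  cases k with
  | zero => simpa using hk
  | succ k =>
    exfalso
    apply hg
    have hpg : (pp : ℤ) ∣ (Int.gcd a b : ℤ) := by
      exact_mod_cast Int.natCast_dvd_natCast.mpr (hk ▸ dvd_pow_self pp (Nat.succ_ne_zero k))
    exact ⟨hpg.trans (Int.gcd_dvd_left a b), hpg.trans (Int.gcd_dvd_right a b)⟩

set_option maxHeartbeats 1000000 in
theorem FCFInv_step (pp N : ℕ) (x : ℝ) (st : FCFSt) (hI : FCFInv pp N x st)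
    (hT : ¬ FCFTerm pp st) : FCFInv pp N x (FCFstep pp st) := by
  unfold FCFstep
  split_ifs with h1 h2 h3 h4 h5 h6
  · -- done mode: impossible
    rcases hI.hm with hm0 | hm0 <;> omega
  · -- chain mode
    have hd := hI.hdiv (Or.inl h2)
    have ht1 := hI.htc h2
    have hq0 := hI.hqm0; have hq1 := hI.hqc1; have hqmc := hI.hqmc
    refine { hqm0 := ?_, hqmc := ?_, hqc1 := ?_, he := ?_, hstrict := ?_, hdet := ?_,
             hgood := ?_, hdiv := ?_, hval := ?_, ht := ?_, htc := ?_, hm := ?_ }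
    · show (0:ℤ) ≤ st.qc; linarith
    · show st.qc ≤ 2 * st.qc + st.e * st.qm
      rcases hI.he with hE | hE
      · rw [hE]; linarith
      · rw [hE]; have := hI.hstrict hE; linarith
    · show (1:ℤ) ≤ 2 * st.qc + st.e * st.qm
      rcases hI.he with hE | hE
      · rw [hE]; linarith
      · rw [hE]; have := hI.hstrict hE; linarith
    · exact Or.inr rfl
    · intro _
      show st.qc < 2 * st.qc + st.e * st.qm
      rcases hI.he with hE | hE
      · rw [hE]; linarith
      · rw [hE]; have := hI.hstrict hE; linarith
    · show st.pc * (2 * st.qc + st.e * st.qm) - (2 * st.pc + st.e * st.pm) * st.qc = (N:ℤ)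
        ∨ st.pc * (2 * st.qc + st.e * st.qm) - (2 * st.pc + st.e * st.pm) * st.qc = -(N:ℤ)
      rcases hI.hdet with hD | hD <;> rcases hI.he with hE | hE
      · right; rw [hE]; linarith
      · left; rw [hE]; linarith
      · left; rw [hE]; linarith
      · right; rw [hE]; linarith
    · rintro ⟨d1, d2⟩
      apply hI.hgood
      constructor
      · have h' := dvd_sub d1 hd.1
        have : 2 * st.pc + st.e * st.pm - (st.pc + st.e * st.pm) = st.pc := by ring
        rwa [this] at h'
      · have h' := dvd_sub d2 hd.2
        have : 2 * st.qc + st.e * st.qm - (st.qc + st.e * st.qm) = st.qc := by ring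
        rwa [this] at h'
    · intro _
      constructor
      · have : 2 * st.pc + st.e * st.pm + (-1) * st.pc = st.pc + st.e * st.pm := by ring
        rw [this]; exact hd.1
      · have : 2 * st.qc + st.e * st.qm + (-1) * st.qc = st.qc + st.e * st.qm := by ring
        rw [this]; exact hd.2
    · show x * ((1:ℝ) * ((2 * st.qc + st.e * st.qm : ℤ) : ℝ) + ((-1 : ℤ) : ℝ) * (st.qc : ℝ))
        = (1:ℝ) * ((2 * st.pc + st.e * st.pm : ℤ) : ℝ) + ((-1 : ℤ) : ℝ) * (st.pc : ℝ)
      have hv := hI.hval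
      rw [ht1] at hv
      push_cast
      linear_combination hv
    · intro h0; exact (one_ne_zero h0).elim
    · intro _; rfl
    · exact Or.inr rfl
  · -- terminal B: integer tail, bad -> enter chain
    have hm0 : st.m = 0 := by rcases hI.hm with hm0 | hm0; exact hm0; exact absurd hm0 h2
    have htt : 1 < st.t := hI.ht hm0
    have hf2 : (2:ℤ) ≤ ⌊st.t⌋ := by
      have h' : (1:ℝ) < (⌊st.t⌋ : ℝ) := by rw [h3]; exact htt
      have h'' : (1:ℤ) < ⌊st.t⌋ := by exact_mod_cast h'
      omega
    have hq0 := hI.hqm0; have hq1 := hI.hqc1; have hqmc := hI.hqmc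
    have hfq : 2 * st.qc ≤ ⌊st.t⌋ * st.qc := mul_le_mul_of_nonneg_right hf2 (by linarith)
    refine { hqm0 := ?_, hqmc := ?_, hqc1 := ?_, he := ?_, hstrict := ?_, hdet := ?_,
             hgood := ?_, hdiv := ?_, hval := ?_, ht := ?_, htc := ?_, hm := ?_ }
    · show (0:ℤ) ≤ st.qc; linarith
    · show st.qc ≤ (⌊st.t⌋ + 1) * st.qc + st.e * st.qm
      rcases hI.he with hE | hE
      · rw [hE]; linarith
      · rw [hE]; have := hI.hstrict hE; linarith
    · show (1:ℤ) ≤ (⌊st.t⌋ + 1) * st.qc + st.e * st.qm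
      rcases hI.he with hE | hE
      · rw [hE]; linarith
      · rw [hE]; have := hI.hstrict hE; linarith
    · exact Or.inr rfl
    · intro _
      show st.qc < (⌊st.t⌋ + 1) * st.qc + st.e * st.qm
      rcases hI.he with hE | hE
      · rw [hE]; linarith
      · rw [hE]; have := hI.hstrict hE; linarith
    · show st.pc * ((⌊st.t⌋ + 1) * st.qc + st.e * st.qm)
          - ((⌊st.t⌋ + 1) * st.pc + st.e * st.pm) * st.qc = (N:ℤ)
        ∨ st.pc * ((⌊st.t⌋ + 1) * st.qc + st.e * st.qm)
          - ((⌊st.t⌋ + 1) * st.pc + st.e * st.pm) * st.qc = -(N:ℤ)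
      rcases hI.hdet with hD | hD <;> rcases hI.he with hE | hE
      · right; rw [hE]; linear_combination -hD
      · left; rw [hE]; linear_combination hD
      · left; rw [hE]; linear_combination -hD
      · right; rw [hE]; linear_combination hD
    · rintro ⟨d1, d2⟩
      apply hI.hgood
      constructor
      · have h' := dvd_sub d1 h4.1
        have heq : (⌊st.t⌋ + 1) * st.pc + st.e * st.pm - (⌊st.t⌋ * st.pc + st.e * st.pm) = st.pc := by ring
        rwa [heq] at h'
      · have h' := dvd_sub d2 h4.2
        have heq : (⌊st.t⌋ + 1) * st.qc + st.e * st.qm - (⌊st.t⌋ * st.qc + st.e * st.qm) = st.qc := by ring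
        rwa [heq] at h'
    · intro _
      constructor
      · have heq : (⌊st.t⌋ + 1) * st.pc + st.e * st.pm + (-1) * st.pc
            = ⌊st.t⌋ * st.pc + st.e * st.pm := by ring
        rw [heq]; exact h4.1
      · have heq : (⌊st.t⌋ + 1) * st.qc + st.e * st.qm + (-1) * st.qc
            = ⌊st.t⌋ * st.qc + st.e * st.qm := by ring
        rw [heq]; exact h4.2
    · show x * ((1:ℝ) * (((⌊st.t⌋ + 1) * st.qc + st.e * st.qm : ℤ) : ℝ) + ((-1 : ℤ) : ℝ) * (st.qc : ℝ))
        = (1:ℝ) * (((⌊st.t⌋ + 1) * st.pc + st.e * st.pm : ℤ) : ℝ) + ((-1 : ℤ) : ℝ) * (st.pc : ℝ)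
      have hv := hI.hval
      rw [← h3] at hv
      push_cast
      push_cast at hv
      linear_combination hv
    · intro h0; exact (one_ne_zero h0).elim
    · intro _; rfl
    · exact Or.inr rfl
  · -- terminal A: contradicts not-Term
    have hm0 : st.m = 0 := by rcases hI.hm with hm0 | hm0; exact hm0; exact absurd hm0 h2
    exact absurd ⟨hm0, h3, h4⟩ hT
  · -- forced step
    have hm0 : st.m = 0 := by rcases hI.hm with hm0 | hm0; exact hm0; exact absurd hm0 h2
    have htt : 1 < st.t := hI.ht hm0
    obtain ⟨hE, ht2⟩ := h5
    have hd := hI.hdiv (Or.inr hE)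
    have hqs := hI.hstrict hE
    have hq0 := hI.hqm0; have hq1 := hI.hqc1
    refine { hqm0 := ?_, hqmc := ?_, hqc1 := ?_, he := ?_, hstrict := ?_, hdet := ?_,
             hgood := ?_, hdiv := ?_, hval := ?_, ht := ?_, htc := ?_, hm := ?_ }
    · show (0:ℤ) ≤ st.qc; linarith
    · show st.qc ≤ 2 * st.qc + st.e * st.qm
      rw [hE]; linarith
    · show (1:ℤ) ≤ 2 * st.qc + st.e * st.qm
      rw [hE]; linarith
    · exact Or.inr rfl
    · intro _
      show st.qc < 2 * st.qc + st.e * st.qm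
      rw [hE]; linarith
    · show st.pc * (2 * st.qc + st.e * st.qm) - (2 * st.pc + st.e * st.pm) * st.qc = (N:ℤ)
        ∨ st.pc * (2 * st.qc + st.e * st.qm) - (2 * st.pc + st.e * st.pm) * st.qc = -(N:ℤ)
      rcases hI.hdet with hD | hD
      · left; rw [hE]; linear_combination hD
      · right; rw [hE]; linear_combination hD
    · rintro ⟨d1, d2⟩
      apply hI.hgood
      constructor
      · have h' := dvd_sub d1 hd.1
        have heq : 2 * st.pc + st.e * st.pm - (st.pc + st.e * st.pm) = st.pc := by ring
        rwa [heq] at h'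
      · have h' := dvd_sub d2 hd.2
        have heq : 2 * st.qc + st.e * st.qm - (st.qc + st.e * st.qm) = st.qc := by ring
        rwa [heq] at h'
    · intro _
      constructor
      · have heq : 2 * st.pc + st.e * st.pm + (-1) * st.pc = st.pc + st.e * st.pm := by ring
        rw [heq]; exact hd.1
      · have heq : 2 * st.qc + st.e * st.qm + (-1) * st.qc = st.qc + st.e * st.qm := by ring
        rw [heq]; exact hd.2
    · show x * ((1 / (2 - st.t)) * ((2 * st.qc + st.e * st.qm : ℤ) : ℝ) + ((-1 : ℤ) : ℝ) * (st.qc : ℝ))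
        = (1 / (2 - st.t)) * ((2 * st.pc + st.e * st.pm : ℤ) : ℝ) + ((-1 : ℤ) : ℝ) * (st.pc : ℝ)
      have hv := hI.hval
      rw [hE] at hv
      rw [hE]
      have hne : (2:ℝ) - st.t ≠ 0 := ne_of_gt (by linarith)
      push_cast
      push_cast at hv
      field_simp
      linear_combination hv
    · intro _
      rw [one_lt_div (by linarith : (0:ℝ) < 2 - st.t)]
      linarith
    · intro h0; exact (zero_ne_one h0).elim
    · exact Or.inl rfl
  · -- ceil step (floor was bad)
    have hm0 : st.m = 0 := by rcases hI.hm with hm0 | hm0; exact hm0; exact absurd hm0 h2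
    have htt : 1 < st.t := hI.ht hm0
    have hfl : (⌊st.t⌋ : ℝ) < st.t := lt_of_le_of_ne (Int.floor_le _) h3
    have hfu : st.t < (⌊st.t⌋ : ℝ) + 1 := Int.lt_floor_add_one _
    have hf1 : (1:ℤ) ≤ ⌊st.t⌋ := Int.le_floor.mpr (by exact_mod_cast htt.le)
    have hq0 := hI.hqm0; have hq1 := hI.hqc1; have hqmc := hI.hqmc
    have hfq : 1 * st.qc ≤ ⌊st.t⌋ * st.qc := mul_le_mul_of_nonneg_right hf1 (by linarith)
    have hEf : st.e = -1 → (2:ℤ) ≤ ⌊st.t⌋ := by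
      intro hE
      have ht2 : (2:ℝ) ≤ st.t := by
        by_contra hc
        exact h5 ⟨hE, by linarith⟩
      exact Int.le_floor.mpr (by exact_mod_cast ht2)
    refine { hqm0 := ?_, hqmc := ?_, hqc1 := ?_, he := ?_, hstrict := ?_, hdet := ?_,
             hgood := ?_, hdiv := ?_, hval := ?_, ht := ?_, htc := ?_, hm := ?_ }
    · show (0:ℤ) ≤ st.qc; linarith
    · show st.qc ≤ (⌊st.t⌋ + 1) * st.qc + st.e * st.qm
      rcases hI.he with hE | hE
      · rw [hE]; linarith
      · rw [hE]
        have := hI.hstrict hE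
        have hf2 := hEf hE
        have : 2 * st.qc ≤ ⌊st.t⌋ * st.qc := mul_le_mul_of_nonneg_right hf2 (by linarith)
        have := hI.hstrict hE
        linarith
    · show (1:ℤ) ≤ (⌊st.t⌋ + 1) * st.qc + st.e * st.qm
      rcases hI.he with hE | hE
      · rw [hE]; linarith
      · rw [hE]
        have := hI.hstrict hE
        have hf2 := hEf hE
        have : 2 * st.qc ≤ ⌊st.t⌋ * st.qc := mul_le_mul_of_nonneg_right hf2 (by linarith)
        linarith
    · exact Or.inr rfl
    · intro _
      show st.qc < (⌊st.t⌋ + 1) * st.qc + st.e * st.qm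
      rcases hI.he with hE | hE
      · rw [hE]; linarith
      · rw [hE]
        have := hI.hstrict hE
        have hf2 := hEf hE
        have : 2 * st.qc ≤ ⌊st.t⌋ * st.qc := mul_le_mul_of_nonneg_right hf2 (by linarith)
        linarith
    · show st.pc * ((⌊st.t⌋ + 1) * st.qc + st.e * st.qm)
          - ((⌊st.t⌋ + 1) * st.pc + st.e * st.pm) * st.qc = (N:ℤ)
        ∨ st.pc * ((⌊st.t⌋ + 1) * st.qc + st.e * st.qm)
          - ((⌊st.t⌋ + 1) * st.pc + st.e * st.pm) * st.qc = -(N:ℤ)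
      rcases hI.hdet with hD | hD <;> rcases hI.he with hE | hE
      · right; rw [hE]; linear_combination -hD
      · left; rw [hE]; linear_combination hD
      · left; rw [hE]; linear_combination -hD
      · right; rw [hE]; linear_combination hD
    · rintro ⟨d1, d2⟩
      apply hI.hgood
      constructor
      · have h' := dvd_sub d1 h6.1
        have heq : (⌊st.t⌋ + 1) * st.pc + st.e * st.pm - (⌊st.t⌋ * st.pc + st.e * st.pm) = st.pc := by ring
        rwa [heq] at h'
      · have h' := dvd_sub d2 h6.2
        have heq : (⌊st.t⌋ + 1) * st.qc + st.e * st.qm - (⌊st.t⌋ * st.qc + st.e * st.qm) = st.qc := by ring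
        rwa [heq] at h'
    · intro _
      constructor
      · have heq : (⌊st.t⌋ + 1) * st.pc + st.e * st.pm + (-1) * st.pc
            = ⌊st.t⌋ * st.pc + st.e * st.pm := by ring
        rw [heq]; exact h6.1
      · have heq : (⌊st.t⌋ + 1) * st.qc + st.e * st.qm + (-1) * st.qc
            = ⌊st.t⌋ * st.qc + st.e * st.qm := by ring
        rw [heq]; exact h6.2
    · show x * ((1 / ((⌊st.t⌋ : ℝ) + 1 - st.t)) * (((⌊st.t⌋ + 1) * st.qc + st.e * st.qm : ℤ) : ℝ)
            + ((-1 : ℤ) : ℝ) * (st.qc : ℝ))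
        = (1 / ((⌊st.t⌋ : ℝ) + 1 - st.t)) * (((⌊st.t⌋ + 1) * st.pc + st.e * st.pm : ℤ) : ℝ)
            + ((-1 : ℤ) : ℝ) * (st.pc : ℝ)
      have hv := hI.hval
      have hne : (⌊st.t⌋ : ℝ) + 1 - st.t ≠ 0 := ne_of_gt (by linarith)
      push_cast
      push_cast at hv
      field_simp
      linear_combination hv
    · intro _
      rw [one_lt_div (by linarith : (0:ℝ) < (⌊st.t⌋ : ℝ) + 1 - st.t)]
      linarith
    · intro h0; exact (zero_ne_one h0).elim
    · exact Or.inl rfl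
  · -- floor step
    have hm0 : st.m = 0 := by rcases hI.hm with hm0 | hm0; exact hm0; exact absurd hm0 h2
    have htt : 1 < st.t := hI.ht hm0
    have hfl : (⌊st.t⌋ : ℝ) < st.t := lt_of_le_of_ne (Int.floor_le _) h3
    have hfu : st.t < (⌊st.t⌋ : ℝ) + 1 := Int.lt_floor_add_one _
    have hf1 : (1:ℤ) ≤ ⌊st.t⌋ := Int.le_floor.mpr (by exact_mod_cast htt.le)
    have hq0 := hI.hqm0; have hq1 := hI.hqc1; have hqmc := hI.hqmc
    have hfq : 1 * st.qc ≤ ⌊st.t⌋ * st.qc := mul_le_mul_of_nonneg_right hf1 (by linarith)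
    have hEf : st.e = -1 → (2:ℤ) ≤ ⌊st.t⌋ := by
      intro hE
      have ht2 : (2:ℝ) ≤ st.t := by
        by_contra hc
        exact h5 ⟨hE, by linarith⟩
      exact Int.le_floor.mpr (by exact_mod_cast ht2)
    refine { hqm0 := ?_, hqmc := ?_, hqc1 := ?_, he := ?_, hstrict := ?_, hdet := ?_,
             hgood := ?_, hdiv := ?_, hval := ?_, ht := ?_, htc := ?_, hm := ?_ }
    · show (0:ℤ) ≤ st.qc; linarith
    · show st.qc ≤ ⌊st.t⌋ * st.qc + st.e * st.qm
      rcases hI.he with hE | hE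
      · rw [hE]; linarith
      · rw [hE]
        have := hI.hstrict hE
        have hf2 := hEf hE
        have : 2 * st.qc ≤ ⌊st.t⌋ * st.qc := mul_le_mul_of_nonneg_right hf2 (by linarith)
        linarith
    · show (1:ℤ) ≤ ⌊st.t⌋ * st.qc + st.e * st.qm
      rcases hI.he with hE | hE
      · rw [hE]; linarith
      · rw [hE]
        have := hI.hstrict hE
        have hf2 := hEf hE
        have : 2 * st.qc ≤ ⌊st.t⌋ * st.qc := mul_le_mul_of_nonneg_right hf2 (by linarith)
        linarith
    · exact Or.inl rfl
    · intro h0; exact absurd h0 (by norm_num)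
    · show st.pc * (⌊st.t⌋ * st.qc + st.e * st.qm)
          - (⌊st.t⌋ * st.pc + st.e * st.pm) * st.qc = (N:ℤ)
        ∨ st.pc * (⌊st.t⌋ * st.qc + st.e * st.qm)
          - (⌊st.t⌋ * st.pc + st.e * st.pm) * st.qc = -(N:ℤ)
      rcases hI.hdet with hD | hD <;> rcases hI.he with hE | hE
      · right; rw [hE]; linear_combination -hD
      · left; rw [hE]; linear_combination hD
      · left; rw [hE]; linear_combination -hD
      · right; rw [hE]; linear_combination hD
    · exact h6
    · rintro (h0 | h0)
      · exact absurd h0 (by norm_num)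
      · exact absurd h0 (by norm_num)
    · show x * ((1 / (st.t - (⌊st.t⌋ : ℝ))) * ((⌊st.t⌋ * st.qc + st.e * st.qm : ℤ) : ℝ)
            + ((1 : ℤ) : ℝ) * (st.qc : ℝ))
        = (1 / (st.t - (⌊st.t⌋ : ℝ))) * ((⌊st.t⌋ * st.pc + st.e * st.pm : ℤ) : ℝ)
            + ((1 : ℤ) : ℝ) * (st.pc : ℝ)
      have hv := hI.hval
      have hne : st.t - (⌊st.t⌋ : ℝ) ≠ 0 := ne_of_gt (by linarith)
      have hu : (1 / (st.t - (⌊st.t⌋ : ℝ))) * (st.t - (⌊st.t⌋ : ℝ)) = 1 := one_div_mul_cancel hne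
      push_cast
      push_cast at hv
      linear_combination (1 / (st.t - (⌊st.t⌋ : ℝ))) * hv - (x * (st.qc : ℝ) - (st.pc : ℝ)) * hu
    · intro _
      rw [one_lt_div (by linarith : (0:ℝ) < st.t - (⌊st.t⌋ : ℝ))]
      linarith
    · intro h0; exact (zero_ne_one h0).elim
    · exact Or.inl rfl

set_option maxHeartbeats 1000000 in
theorem FCFstep_conds (pp N l : ℕ) (hp : pp.Prime) (hN : (N : ℤ) = (pp : ℤ) ^ l)
    (x : ℝ) (st : FCFSt) (hI : FCFInv pp N x st) :
    1 ≤ (FCFstep pp st).a ∧ 1 ≤ (FCFstep pp st).a + (FCFstep pp st).e ∧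
    1 ≤ (FCFstep pp st).a + st.e ∧ IsCoprime (FCFstep pp st).pc (FCFstep pp st).qc := by
  have hdet' : ∀ (A : ℤ), st.pc * (A * st.qc + st.e * st.qm) - (A * st.pc + st.e * st.pm) * st.qc
      = (pp:ℤ)^l ∨ st.pc * (A * st.qc + st.e * st.qm) - (A * st.pc + st.e * st.pm) * st.qc
      = -((pp:ℤ)^l) := by
    intro A
    rcases hI.hdet with hD | hD <;> rcases hI.he with hE | hE
    · right; rw [hE, ← hN]; linear_combination -hD
    · left; rw [hE, ← hN]; linear_combination hD
    · left; rw [hE, ← hN]; linear_combination -hD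
    · right; rw [hE, ← hN]; linear_combination hD
  unfold FCFstep
  split_ifs with h1 h2 h3 h4 h5 h6
  · rcases hI.hm with hm0 | hm0 <;> omega
  · -- chain
    have hd := hI.hdiv (Or.inl h2)
    refine ⟨by norm_num, by norm_num, ?_, ?_⟩
    · show 1 ≤ 2 + st.e; rcases hI.he with hE | hE <;> rw [hE] <;> norm_num
    · refine isCoprime_of_det pp hp l _ _ st.pc st.qc (hdet' 2) ?_
      rintro ⟨d1, d2⟩
      apply hI.hgood
      constructor
      · have h' := dvd_sub d1 hd.1
        have heq : 2 * st.pc + st.e * st.pm - (st.pc + st.e * st.pm) = st.pc := by ring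
        rwa [heq] at h'
      · have h' := dvd_sub d2 hd.2
        have heq : 2 * st.qc + st.e * st.qm - (st.qc + st.e * st.qm) = st.qc := by ring
        rwa [heq] at h'
  · -- terminal B
    have hm0 : st.m = 0 := by rcases hI.hm with hm0 | hm0; exact hm0; exact absurd hm0 h2
    have htt : 1 < st.t := hI.ht hm0
    have hf2 : (2:ℤ) ≤ ⌊st.t⌋ := by
      have h' : (1:ℝ) < (⌊st.t⌋ : ℝ) := by rw [h3]; exact htt
      have h'' : (1:ℤ) < ⌊st.t⌋ := by exact_mod_cast h'
      omega
    refine ⟨by show (1:ℤ) ≤ ⌊st.t⌋ + 1; omega, by show (1:ℤ) ≤ ⌊st.t⌋ + 1 + (-1); omega, ?_, ?_⟩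
    · show 1 ≤ ⌊st.t⌋ + 1 + st.e; rcases hI.he with hE | hE <;> rw [hE] <;> omega
    · refine isCoprime_of_det pp hp l _ _ st.pc st.qc (hdet' _) ?_
      rintro ⟨d1, d2⟩
      apply hI.hgood
      constructor
      · have h' := dvd_sub d1 h4.1
        have heq : (⌊st.t⌋ + 1) * st.pc + st.e * st.pm - (⌊st.t⌋ * st.pc + st.e * st.pm) = st.pc := by
          ring
        rwa [heq] at h'
      · have h' := dvd_sub d2 h4.2
        have heq : (⌊st.t⌋ + 1) * st.qc + st.e * st.qm - (⌊st.t⌋ * st.qc + st.e * st.qm) = st.qc := by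
          ring
        rwa [heq] at h'
  · -- terminal A
    have hm0 : st.m = 0 := by rcases hI.hm with hm0 | hm0; exact hm0; exact absurd hm0 h2
    have htt : 1 < st.t := hI.ht hm0
    have hf2 : (2:ℤ) ≤ ⌊st.t⌋ := by
      have h' : (1:ℝ) < (⌊st.t⌋ : ℝ) := by rw [h3]; exact htt
      have h'' : (1:ℤ) < ⌊st.t⌋ := by exact_mod_cast h'
      omega
    refine ⟨by show (1:ℤ) ≤ ⌊st.t⌋; omega, by show (1:ℤ) ≤ ⌊st.t⌋ + 1; omega, ?_, ?_⟩
    · show 1 ≤ ⌊st.t⌋ + st.e; rcases hI.he with hE | hE <;> rw [hE] <;> omega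
    · exact isCoprime_of_det pp hp l _ _ st.pc st.qc (hdet' _) h4
  · -- forced
    obtain ⟨hE, ht2⟩ := h5
    have hd := hI.hdiv (Or.inr hE)
    refine ⟨by norm_num, by norm_num, ?_, ?_⟩
    · show 1 ≤ 2 + st.e; rw [hE]; norm_num
    · refine isCoprime_of_det pp hp l _ _ st.pc st.qc (hdet' 2) ?_
      rintro ⟨d1, d2⟩
      apply hI.hgood
      constructor
      · have h' := dvd_sub d1 hd.1
        have heq : 2 * st.pc + st.e * st.pm - (st.pc + st.e * st.pm) = st.pc := by ring
        rwa [heq] at h'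
      · have h' := dvd_sub d2 hd.2
        have heq : 2 * st.qc + st.e * st.qm - (st.qc + st.e * st.qm) = st.qc := by ring
        rwa [heq] at h'
  · -- ceil
    have hm0 : st.m = 0 := by rcases hI.hm with hm0 | hm0; exact hm0; exact absurd hm0 h2
    have htt : 1 < st.t := hI.ht hm0
    have hf1 : (1:ℤ) ≤ ⌊st.t⌋ := Int.le_floor.mpr (by exact_mod_cast htt.le)
    refine ⟨by show (1:ℤ) ≤ ⌊st.t⌋ + 1; omega, by show (1:ℤ) ≤ ⌊st.t⌋ + 1 + (-1); omega, ?_, ?_⟩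
    · show 1 ≤ ⌊st.t⌋ + 1 + st.e; rcases hI.he with hE | hE <;> rw [hE] <;> omega
    · refine isCoprime_of_det pp hp l _ _ st.pc st.qc (hdet' _) ?_
      rintro ⟨d1, d2⟩
      apply hI.hgood
      constructor
      · have h' := dvd_sub d1 h6.1
        have heq : (⌊st.t⌋ + 1) * st.pc + st.e * st.pm - (⌊st.t⌋ * st.pc + st.e * st.pm) = st.pc := by
          ring
        rwa [heq] at h'
      · have h' := dvd_sub d2 h6.2
        have heq : (⌊st.t⌋ + 1) * st.qc + st.e * st.qm - (⌊st.t⌋ * st.qc + st.e * st.qm) = st.qc := by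
          ring
        rwa [heq] at h'
  · -- floor
    have hm0 : st.m = 0 := by rcases hI.hm with hm0 | hm0; exact hm0; exact absurd hm0 h2
    have htt : 1 < st.t := hI.ht hm0
    have hf1 : (1:ℤ) ≤ ⌊st.t⌋ := Int.le_floor.mpr (by exact_mod_cast htt.le)
    have hEf : st.e = -1 → (2:ℤ) ≤ ⌊st.t⌋ := by
      intro hE
      have ht2 : (2:ℝ) ≤ st.t := by
        by_contra hc
        exact h5 ⟨hE, by linarith⟩
      exact Int.le_floor.mpr (by exact_mod_cast ht2)
    refine ⟨by show (1:ℤ) ≤ ⌊st.t⌋; omega, by show (1:ℤ) ≤ ⌊st.t⌋ + 1; omega, ?_, ?_⟩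
    · show 1 ≤ ⌊st.t⌋ + st.e
      rcases hI.he with hE | hE
      · rw [hE]; omega
      · have := hEf hE; rw [hE]; omega
    · exact isCoprime_of_det pp hp l _ _ st.pc st.qc (hdet' _) h6

set_option maxHeartbeats 1000000 in
theorem FCFterm_val (pp N : ℕ) (x : ℝ) (st : FCFSt) (hI : FCFInv pp N x st)
    (hT : FCFTerm pp st) :
    x * ((FCFstep pp st).qc : ℝ) = ((FCFstep pp st).pc : ℝ) ∧ 1 ≤ (FCFstep pp st).qc := by
  obtain ⟨hm0, h3, h4⟩ := hT
  have htt : 1 < st.t := hI.ht hm0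
  have hf2 : (2:ℤ) ≤ ⌊st.t⌋ := by
    have h' : (1:ℝ) < (⌊st.t⌋ : ℝ) := by rw [h3]; exact htt
    have h'' : (1:ℤ) < ⌊st.t⌋ := by exact_mod_cast h'
    omega
  have hq0 := hI.hqm0; have hq1 := hI.hqc1; have hqmc := hI.hqmc
  unfold FCFstep
  rw [if_neg (by omega : ¬st.m = 2), if_neg (by omega : ¬st.m = 1), dif_pos h3, if_neg h4]
  constructor
  · show x * ((⌊st.t⌋ * st.qc + st.e * st.qm : ℤ) : ℝ) = ((⌊st.t⌋ * st.pc + st.e * st.pm : ℤ) : ℝ)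
    have hv := hI.hval
    rw [← h3] at hv
    push_cast
    push_cast at hv
    linear_combination hv
  · show (1:ℤ) ≤ ⌊st.t⌋ * st.qc + st.e * st.qm
    have hfq : 2 * st.qc ≤ ⌊st.t⌋ * st.qc := mul_le_mul_of_nonneg_right hf2 (by linarith)
    rcases hI.he with hE | hE
    · rw [hE]; linarith
    · rw [hE]; have := hI.hstrict hE; linarith

set_option maxHeartbeats 1000000 in
theorem FCFstep_qgrow (pp N : ℕ) (x : ℝ) (st : FCFSt) (hI : FCFInv pp N x st)
    (h1m : 1 ≤ st.qm) : st.qc + 1 ≤ (FCFstep pp st).qc := by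
  have hq0 := hI.hqm0; have hq1 := hI.hqc1; have hqmc := hI.hqmc
  unfold FCFstep
  split_ifs with h1 h2 h3 h4 h5 h6
  · rcases hI.hm with hm0 | hm0 <;> omega
  · show st.qc + 1 ≤ 2 * st.qc + st.e * st.qm
    rcases hI.he with hE | hE
    · rw [hE]; linarith
    · rw [hE]; have := hI.hstrict hE; linarith
  all_goals (
    try (have hm0 : st.m = 0 := by rcases hI.hm with hm0 | hm0; exact hm0; exact absurd hm0 h2);
    try (have htt : 1 < st.t := hI.ht hm0))
  · -- terminal B
    have hf2 : (2:ℤ) ≤ ⌊st.t⌋ := by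
      have h' : (1:ℝ) < (⌊st.t⌋ : ℝ) := by rw [h3]; exact htt
      have h'' : (1:ℤ) < ⌊st.t⌋ := by exact_mod_cast h'
      omega
    have hfq : 2 * st.qc ≤ ⌊st.t⌋ * st.qc := mul_le_mul_of_nonneg_right hf2 (by linarith)
    show st.qc + 1 ≤ (⌊st.t⌋ + 1) * st.qc + st.e * st.qm
    rcases hI.he with hE | hE
    · rw [hE]; linarith
    · rw [hE]; have := hI.hstrict hE; linarith
  · -- terminal A
    have hf2 : (2:ℤ) ≤ ⌊st.t⌋ := by
      have h' : (1:ℝ) < (⌊st.t⌋ : ℝ) := by rw [h3]; exact htt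
      have h'' : (1:ℤ) < ⌊st.t⌋ := by exact_mod_cast h'
      omega
    have hfq : 2 * st.qc ≤ ⌊st.t⌋ * st.qc := mul_le_mul_of_nonneg_right hf2 (by linarith)
    show st.qc + 1 ≤ ⌊st.t⌋ * st.qc + st.e * st.qm
    rcases hI.he with hE | hE
    · rw [hE]; linarith
    · rw [hE]; have := hI.hstrict hE; linarith
  · -- forced
    show st.qc + 1 ≤ 2 * st.qc + st.e * st.qm
    rw [h5.1]; have := hI.hstrict h5.1; linarith
  · -- ceil
    have hf1 : (1:ℤ) ≤ ⌊st.t⌋ := Int.le_floor.mpr (by exact_mod_cast htt.le)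
    have hfq : 1 * st.qc ≤ ⌊st.t⌋ * st.qc := mul_le_mul_of_nonneg_right hf1 (by linarith)
    show st.qc + 1 ≤ (⌊st.t⌋ + 1) * st.qc + st.e * st.qm
    rcases hI.he with hE | hE
    · rw [hE]; linarith
    · rw [hE]; have := hI.hstrict hE; linarith
  · -- floor
    have hf1 : (1:ℤ) ≤ ⌊st.t⌋ := Int.le_floor.mpr (by exact_mod_cast htt.le)
    have hfq : 1 * st.qc ≤ ⌊st.t⌋ * st.qc := mul_le_mul_of_nonneg_right hf1 (by linarith)
    have hEf : st.e = -1 → (2:ℤ) ≤ ⌊st.t⌋ := by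
      intro hE
      have ht2 : (2:ℝ) ≤ st.t := by
        by_contra hc
        exact h5 ⟨hE, by linarith⟩
      exact Int.le_floor.mpr (by exact_mod_cast ht2)
    show st.qc + 1 ≤ ⌊st.t⌋ * st.qc + st.e * st.qm
    rcases hI.he with hE | hE
    · rw [hE]; linarith
    · rw [hE]
      have := hI.hstrict hE
      have hf2 := hEf hE
      have : 2 * st.qc ≤ ⌊st.t⌋ * st.qc := mul_le_mul_of_nonneg_right hf2 (by linarith)
      have := hI.hstrict hE
      linarith

set_option maxHeartbeats 1000000 in
theorem FCFbound (pp N : ℕ) (x : ℝ) (st : FCFSt) (hI : FCFInv pp N x st) :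
    |x - (st.pc : ℝ) / (st.qc : ℝ)| ≤ (N : ℝ) / (st.qc : ℝ) := by
  have hq : (0:ℝ) < (st.qc : ℝ) := by exact_mod_cast lt_of_lt_of_le zero_lt_one hI.hqc1
  have hqm : (0:ℝ) ≤ (st.qm : ℝ) := by exact_mod_cast hI.hqm0
  have hqmc : (st.qm : ℝ) ≤ (st.qc : ℝ) := by exact_mod_cast hI.hqmc
  have htge : (1:ℝ) ≤ st.t := by
    rcases hI.hm with hm0 | hm0
    · exact (hI.ht hm0).le
    · rw [hI.htc hm0]
  have hq1 : (1:ℝ) ≤ (st.qc : ℝ) := by exact_mod_cast hI.hqc1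
  have hmul : 1 * (st.qc : ℝ) ≤ st.t * (st.qc : ℝ) :=
    mul_le_mul_of_nonneg_right htge (by linarith)
  have hD1 : (1:ℝ) ≤ st.t * (st.qc : ℝ) + (st.e : ℝ) * (st.qm : ℝ) := by
    rcases hI.he with hE | hE
    · rw [hE]; push_cast; nlinarith
    · rw [hE]; push_cast
      have : (st.qm : ℝ) + 1 ≤ (st.qc : ℝ) := by exact_mod_cast hI.hstrict hE
      nlinarith
  have hkey : (x * (st.qc : ℝ) - (st.pc : ℝ)) * (st.t * (st.qc : ℝ) + (st.e : ℝ) * (st.qm : ℝ))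
      = (st.e : ℝ) * ((st.pm : ℝ) * (st.qc : ℝ) - (st.pc : ℝ) * (st.qm : ℝ)) := by
    linear_combination (st.qc : ℝ) * hI.hval
  have habs : |x * (st.qc : ℝ) - (st.pc : ℝ)| ≤ (N : ℝ) := by
    have hdet : |(st.e : ℝ) * ((st.pm : ℝ) * (st.qc : ℝ) - (st.pc : ℝ) * (st.qm : ℝ))| = (N : ℝ) := by
      rw [abs_mul]
      have he1 : |(st.e : ℝ)| = 1 := by
        rcases hI.he with hE | hE <;> rw [hE] <;> norm_num
      rw [he1, one_mul]
      have : ((st.pm * st.qc - st.pc * st.qm : ℤ) : ℝ) = (st.pm : ℝ) * (st.qc : ℝ) - (st.pc : ℝ) * (st.qm : ℝ) := by push_cast; ring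
      rw [← this]
      rcases hI.hdet with hD | hD <;> rw [hD]
      · rw [Int.cast_natCast, abs_of_nonneg (by positivity)]
      · push_cast
        rw [abs_neg, abs_of_nonneg (by positivity)]
    have h1 : |x * (st.qc : ℝ) - (st.pc : ℝ)| * (st.t * (st.qc : ℝ) + (st.e : ℝ) * (st.qm : ℝ)) = (N : ℝ) := by
      rw [← abs_of_pos (lt_of_lt_of_le zero_lt_one hD1), ← abs_mul, hkey, hdet]
    nlinarith [abs_nonneg (x * (st.qc : ℝ) - (st.pc : ℝ))]
  have heq : x - (st.pc : ℝ) / (st.qc : ℝ) = (x * (st.qc : ℝ) - (st.pc : ℝ)) / (st.qc : ℝ) := by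
    field_simp
  rw [heq, abs_div, abs_of_pos hq]
  gcongr

/- Sequence extraction -/
noncomputable def FCFseqP (s : ℕ → FCFSt) : ℕ → ℤ := fun i => if i = 0 then 1 else (s (i-1)).pc
noncomputable def FCFseqQ (s : ℕ → FCFSt) : ℕ → ℤ := fun i => if i = 0 then 0 else (s (i-1)).qc
noncomputable def FCFseqA (s : ℕ → FCFSt) : ℕ → ℤ := fun i => (s i).a
noncomputable def FCFseqE (s : ℕ → FCFSt) : ℕ → ℤ := fun i => (s (i-1)).e

theorem FCFseqP_succ (s : ℕ → FCFSt) (k : ℕ) : FCFseqP s (k+1) = (s k).pc := by simp [FCFseqP]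
theorem FCFseqQ_succ (s : ℕ → FCFSt) (k : ℕ) : FCFseqQ s (k+1) = (s k).qc := by simp [FCFseqQ]
theorem FCFseqE_succ (s : ℕ → FCFSt) (k : ℕ) : FCFseqE s (k+1) = (s k).e := by simp [FCFseqE]



set_option maxHeartbeats 1000000 in
theorem FCFmain (p l : ℕ) (hp : p.Prime) (hl : 1 ≤ l) (x : ℝ) (st0 : FCFSt)
    (hI0 : FCFInv p (p ^ l) x st0) (hpm : st0.pm = 1) (hqm : st0.qm = 0)
    (hqc : st0.qc = ((p ^ l : ℕ) : ℤ)) (hb : IsCoprime st0.pc ((p ^ l : ℕ) : ℤ)) :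
    (∃ (n : ℕ) (F : FCF (p ^ l) n),
      (F.p (n + 1) : ℝ) / (F.q (n + 1) : ℝ) = x) ∨
    (∃ F : FCFInf (p ^ l),
      Filter.Tendsto (fun n => (F.p (n + 1) : ℝ) / (F.q (n + 1) : ℝ))
        Filter.atTop (nhds x)) := by
  classical
  have hN : ((p ^ l : ℕ) : ℤ) = (p : ℤ) ^ l := by push_cast; ring
  set s : ℕ → FCFSt := fun k => (FCFstep p)^[k] st0 with hsdef
  have hs0 : s 0 = st0 := rfl
  have hss : ∀ k, s (k + 1) = FCFstep p (s k) := fun k => Function.iterate_succ_apply' _ _ _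
  have hpmk : ∀ k, (s k).pm = FCFseqP s k := by
    intro k
    cases k with
    | zero => simp [FCFseqP, hs0, hpm]
    | succ j => rw [hss j, FCFstep_pm, FCFseqP_succ]
  have hqmk : ∀ k, (s k).qm = FCFseqQ s k := by
    intro k
    cases k with
    | zero => simp [FCFseqQ, hs0, hqm]
    | succ j => rw [hss j, FCFstep_qm, FCFseqQ_succ]
  by_cases hterm : ∃ k, FCFTerm p (s k)
  · -- finite case
    left
    set n := Nat.find hterm with hn
    have hTn : FCFTerm p (s n) := Nat.find_spec hterm
    have hmin : ∀ m, m < n → ¬ FCFTerm p (s m) := fun m hm => Nat.find_min hterm hm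
    have hInv : ∀ k, k ≤ n → FCFInv p (p ^ l) x (s k) := by
      intro k
      induction k with
      | zero => intro _; exact hI0
      | succ j ih =>
        intro hj
        rw [hss j]
        exact FCFInv_step p (p ^ l) x (s j) (ih (by omega)) (hmin j (by omega))
    refine ⟨n + 1, ⟨st0.pc, FCFseqA s, FCFseqE s, FCFseqP s, FCFseqQ s, hb,
      by simp [FCFseqP], by simp [FCFseqQ],
      by rw [FCFseqP_succ, hs0], by rw [FCFseqQ_succ, hs0, hqc],
      ?_, ?_, ?_, ?_, ?_, ?_, ?_⟩, ?_⟩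
    · -- ha
      intro i h1 h2
      obtain ⟨k, rfl⟩ : ∃ k, i = k + 1 := ⟨i - 1, by omega⟩
      have hc := FCFstep_conds p (p ^ l) l hp hN x (s k) (hInv k (by omega))
      show (s (k + 1)).a ≥ 1
      rw [hss k]
      exact hc.1
    · -- hε
      intro i h1 h2
      obtain ⟨k, rfl⟩ : ∃ k, i = k + 1 := ⟨i - 1, by omega⟩
      rw [FCFseqE_succ]
      exact (hInv k (by omega)).he
    · -- hrecp
      intro i h1 h2
      obtain ⟨k, rfl⟩ : ∃ k, i = k + 1 := ⟨i - 1, by omega⟩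
      have e1 : FCFseqP s (k + 1 + 1) = (FCFstep p (s k)).pc := by rw [FCFseqP_succ, hss]
      have e2 : FCFseqA s (k + 1) = (FCFstep p (s k)).a := by
        show (s (k + 1)).a = _; rw [hss]
      rw [e1, e2, FCFseqP_succ, FCFseqE_succ, FCFstep_recp, show k + 1 - 1 = k from rfl,
        ← hpmk k]
    · -- hrecq
      intro i h1 h2
      obtain ⟨k, rfl⟩ : ∃ k, i = k + 1 := ⟨i - 1, by omega⟩
      have e1 : FCFseqQ s (k + 1 + 1) = (FCFstep p (s k)).qc := by rw [FCFseqQ_succ, hss]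
      have e2 : FCFseqA s (k + 1) = (FCFstep p (s k)).a := by
        show (s (k + 1)).a = _; rw [hss]
      rw [e1, e2, FCFseqQ_succ, FCFseqE_succ, FCFstep_recq, show k + 1 - 1 = k from rfl,
        ← hqmk k]
    · -- cond1
      intro i h1 h2
      obtain ⟨k, rfl⟩ : ∃ k, i = k + 1 := ⟨i - 1, by omega⟩
      have hc := FCFstep_conds p (p ^ l) l hp hN x (s k) (hInv k (by omega))
      have e2 : FCFseqA s (k + 1) = (FCFstep p (s k)).a := by
        show (s (k + 1)).a = _; rw [hss]
      have e3 : FCFseqE s (k + 1 + 1) = (FCFstep p (s k)).e := by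
        rw [FCFseqE_succ, hss]
      rw [e2, e3]
      exact hc.2.1
    · -- cond2
      intro i h1 h2
      obtain ⟨k, rfl⟩ : ∃ k, i = k + 1 := ⟨i - 1, by omega⟩
      have hc := FCFstep_conds p (p ^ l) l hp hN x (s k) (hInv k (by omega))
      have e2 : FCFseqA s (k + 1) = (FCFstep p (s k)).a := by
        show (s (k + 1)).a = _; rw [hss]
      rw [e2, FCFseqE_succ]
      exact hc.2.2.1
    · -- cond3
      intro i h1 h2
      obtain ⟨k, rfl⟩ : ∃ k, i = k + 1 := ⟨i - 1, by omega⟩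
      have hc := FCFstep_conds p (p ^ l) l hp hN x (s k) (hInv k (by omega))
      have e1 : FCFseqP s (k + 1 + 1) = (FCFstep p (s k)).pc := by rw [FCFseqP_succ, hss]
      have e4 : FCFseqQ s (k + 1 + 1) = (FCFstep p (s k)).qc := by rw [FCFseqQ_succ, hss]
      rw [e1, e4]
      exact hc.2.2.2
    · -- the value
      obtain ⟨hv, hq1'⟩ := FCFterm_val p (p ^ l) x (s n) (hInv n le_rfl) hTn
      show ((FCFseqP s (n + 1 + 1) : ℤ) : ℝ) / ((FCFseqQ s (n + 1 + 1) : ℤ) : ℝ) = x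
      rw [FCFseqP_succ, FCFseqQ_succ, hss n]
      have hqpos : (0 : ℝ) < ((FCFstep p (s n)).qc : ℝ) := by
        exact_mod_cast lt_of_lt_of_le zero_lt_one hq1'
      rw [div_eq_iff (ne_of_gt hqpos)]
      linarith [hv]
  · -- infinite case
    right
    have hnot : ∀ k, ¬ FCFTerm p (s k) := not_exists.mp hterm
    have hInv : ∀ k, FCFInv p (p ^ l) x (s k) := by
      intro k
      induction k with
      | zero => exact hI0
      | succ j ih =>
        rw [hss j]
        exact FCFInv_step p (p ^ l) x (s j) ih (hnot j)
    refine ⟨⟨st0.pc, FCFseqA s, FCFseqE s, FCFseqP s, FCFseqQ s, hb,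
      by simp [FCFseqP], by simp [FCFseqQ],
      by rw [FCFseqP_succ, hs0], by rw [FCFseqQ_succ, hs0, hqc],
      ?_, ?_, ?_, ?_, ?_, ?_, ?_⟩, ?_⟩
    · intro i h1
      obtain ⟨k, rfl⟩ : ∃ k, i = k + 1 := ⟨i - 1, by omega⟩
      have hc := FCFstep_conds p (p ^ l) l hp hN x (s k) (hInv k)
      show (s (k + 1)).a ≥ 1
      rw [hss k]
      exact hc.1
    · intro i h1
      obtain ⟨k, rfl⟩ : ∃ k, i = k + 1 := ⟨i - 1, by omega⟩
      rw [FCFseqE_succ]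
      exact (hInv k).he
    · intro i h1
      obtain ⟨k, rfl⟩ : ∃ k, i = k + 1 := ⟨i - 1, by omega⟩
      have e1 : FCFseqP s (k + 1 + 1) = (FCFstep p (s k)).pc := by rw [FCFseqP_succ, hss]
      have e2 : FCFseqA s (k + 1) = (FCFstep p (s k)).a := by
        show (s (k + 1)).a = _; rw [hss]
      rw [e1, e2, FCFseqP_succ, FCFseqE_succ, FCFstep_recp, show k + 1 - 1 = k from rfl,
        ← hpmk k]
    · intro i h1
      obtain ⟨k, rfl⟩ : ∃ k, i = k + 1 := ⟨i - 1, by omega⟩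
      have e1 : FCFseqQ s (k + 1 + 1) = (FCFstep p (s k)).qc := by rw [FCFseqQ_succ, hss]
      have e2 : FCFseqA s (k + 1) = (FCFstep p (s k)).a := by
        show (s (k + 1)).a = _; rw [hss]
      rw [e1, e2, FCFseqQ_succ, FCFseqE_succ, FCFstep_recq, show k + 1 - 1 = k from rfl,
        ← hqmk k]
    · intro i h1
      obtain ⟨k, rfl⟩ : ∃ k, i = k + 1 := ⟨i - 1, by omega⟩
      have hc := FCFstep_conds p (p ^ l) l hp hN x (s k) (hInv k)
      have e2 : FCFseqA s (k + 1) = (FCFstep p (s k)).a := by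
        show (s (k + 1)).a = _; rw [hss]
      have e3 : FCFseqE s (k + 1 + 1) = (FCFstep p (s k)).e := by
        rw [FCFseqE_succ, hss]
      rw [e2, e3]
      exact hc.2.1
    · intro i h1
      obtain ⟨k, rfl⟩ : ∃ k, i = k + 1 := ⟨i - 1, by omega⟩
      have hc := FCFstep_conds p (p ^ l) l hp hN x (s k) (hInv k)
      have e2 : FCFseqA s (k + 1) = (FCFstep p (s k)).a := by
        show (s (k + 1)).a = _; rw [hss]
      rw [e2, FCFseqE_succ]
      exact hc.2.2.1
    · intro i h1
      obtain ⟨k, rfl⟩ : ∃ k, i = k + 1 := ⟨i - 1, by omega⟩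
      have hc := FCFstep_conds p (p ^ l) l hp hN x (s k) (hInv k)
      have e1 : FCFseqP s (k + 1 + 1) = (FCFstep p (s k)).pc := by rw [FCFseqP_succ, hss]
      have e4 : FCFseqQ s (k + 1 + 1) = (FCFstep p (s k)).qc := by rw [FCFseqQ_succ, hss]
      rw [e1, e4]
      exact hc.2.2.2
    · -- convergence
      show Filter.Tendsto
        (fun n => ((FCFseqP s (n + 1) : ℤ) : ℝ) / ((FCFseqQ s (n + 1) : ℤ) : ℝ))
        Filter.atTop (nhds x)
      have hfe : (fun n : ℕ => ((FCFseqP s (n + 1) : ℤ) : ℝ) / ((FCFseqQ s (n + 1) : ℤ) : ℝ))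
          = fun n : ℕ => (((s n).pc : ℤ) : ℝ) / (((s n).qc : ℤ) : ℝ) := by
        funext n
        rw [FCFseqP_succ, FCFseqQ_succ]
      rw [hfe]
      have hqm1 : ∀ k, 1 ≤ (s (k + 1)).qm := by
        intro k
        rw [hss k, FCFstep_qm]
        exact (hInv k).hqc1
      have hqgrow : ∀ k : ℕ, (k : ℤ) ≤ (s k).qc := by
        intro k
        induction k with
        | zero =>
          have := (hInv 0).hqc1
          push_cast
          linarith
        | succ j ih =>
          cases j with
          | zero =>
            have := (hInv 1).hqc1
            push_cast
            linarith
          | succ i =>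
            have hg := FCFstep_qgrow p (p ^ l) x (s (i + 1)) (hInv (i + 1)) (hqm1 i)
            rw [← hss (i + 1)] at hg
            push_cast
            push_cast at ih
            linarith
      have hbound : ∀ k : ℕ, 1 ≤ k →
          ‖(((s k).pc : ℝ) / ((s k).qc : ℝ)) - x‖ ≤ ((p ^ l : ℕ) : ℝ) / k := by
        intro k hk
        have hb1 := FCFbound p (p ^ l) x (s k) (hInv k)
        have hqk : (k : ℝ) ≤ ((s k).qc : ℝ) := by exact_mod_cast hqgrow k
        have hk0 : (0 : ℝ) < (k : ℝ) := by exact_mod_cast hk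
        rw [Real.norm_eq_abs, abs_sub_comm]
        refine hb1.trans ?_
        gcongr
      have h0 : Filter.Tendsto (fun k : ℕ => (((s k).pc : ℝ) / ((s k).qc : ℝ)) - x)
          Filter.atTop (nhds 0) := by
        apply squeeze_zero_norm' ?_ (tendsto_const_div_atTop_nhds_zero_nat ((p ^ l : ℕ) : ℝ))
        filter_upwards [Filter.eventually_ge_atTop 1] with k hk
        exact hbound k hk
      have h1 := h0.add (tendsto_const_nhds (x := x))
      simpa using h1

/-- Every real number `x` has an `F_{p^l}`-continued fraction
expansion: either a finite one whose value (last convergent) equals `x`, or an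
infinite one whose sequence of convergents converges to `x`. -/
theorem stmt18 (p l : ℕ) (hp : p.Prime) (hl : 1 ≤ l) (x : ℝ) :
    (∃ (n : ℕ) (F : FCF (p ^ l) n),
      (F.p (n + 1) : ℝ) / (F.q (n + 1) : ℝ) = x) ∨
    (∃ F : FCFInf (p ^ l),
      Filter.Tendsto (fun n => (F.p (n + 1) : ℝ) / (F.q (n + 1) : ℝ))
        Filter.atTop (nhds x)) := by
  classical
  set y : ℝ := ((p ^ l : ℕ) : ℝ) * x with hy
  have hN : ((p ^ l : ℕ) : ℤ) = (p : ℤ) ^ l := by push_cast; ring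
  have hp2 : (2 : ℤ) ≤ (p : ℤ) := by exact_mod_cast hp.two_le
  have hN1 : 1 ≤ p ^ l := Nat.one_le_pow _ _ (by omega)
  have hN1z : (1 : ℤ) ≤ ((p ^ l : ℕ) : ℤ) := by exact_mod_cast hN1
  have hpdvdN : (p : ℤ) ∣ ((p ^ l : ℕ) : ℤ) := by
    rw [hN]; exact dvd_pow_self _ (by omega)
  have hone : ¬ (p : ℤ) ∣ (1 : ℤ) := by
    intro h
    have := Int.le_of_dvd one_pos h
    omega
  by_cases hyint : (⌊y⌋ : ℝ) = y
  · by_cases hdvd : (p : ℤ) ∣ ⌊y⌋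
    · -- y = Nx is an integer divisible by p: start in chain mode with b = ⌊y⌋ - 1
      have hI0 : FCFInv p (p ^ l) x ⟨1, ⌊y⌋ - 1, 0, ((p ^ l : ℕ) : ℤ), 1, 1, 1, 1⟩ := by
        refine { hqm0 := le_refl 0, hqmc := by show (0:ℤ) ≤ ((p ^ l : ℕ) : ℤ); omega, hqc1 := hN1z, he := Or.inl rfl,
                 hstrict := ?_, hdet := ?_, hgood := ?_, hdiv := ?_, hval := ?_,
                 ht := ?_, htc := fun _ => rfl, hm := Or.inr rfl }
        · intro h; exact absurd h (by norm_num)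
        · left; show (1 : ℤ) * ((p ^ l : ℕ) : ℤ) - (⌊y⌋ - 1) * 0 = ((p ^ l : ℕ) : ℤ); ring
        · rintro ⟨h1, _⟩
          have h2 := dvd_sub hdvd h1
          have heq : ⌊y⌋ - (⌊y⌋ - 1) = 1 := by ring
          rw [heq] at h2
          exact hone h2
        · intro _
          constructor
          · show (p : ℤ) ∣ (⌊y⌋ - 1 + 1 * 1)
            have heq : ⌊y⌋ - 1 + 1 * 1 = ⌊y⌋ := by ring
            rw [heq]; exact hdvd
          · show (p : ℤ) ∣ (((p ^ l : ℕ) : ℤ) + 1 * 0)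
            have heq : ((p ^ l : ℕ) : ℤ) + 1 * 0 = ((p ^ l : ℕ) : ℤ) := by ring
            rw [heq]; exact hpdvdN
        · show x * ((1 : ℝ) * (((p ^ l : ℕ) : ℤ) : ℝ) + ((1 : ℤ) : ℝ) * ((0 : ℤ) : ℝ))
            = (1 : ℝ) * ((⌊y⌋ - 1 : ℤ) : ℝ) + ((1 : ℤ) : ℝ) * ((1 : ℤ) : ℝ)
          push_cast
          push_cast at hy
          linear_combination -hyint - hy
        · intro h0; exact absurd h0 (by norm_num)
      have hbc : IsCoprime ((⌊y⌋ : ℤ) - 1) ((p ^ l : ℕ) : ℤ) := by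
        refine isCoprime_of_det p hp l _ _ 1 0 (Or.inl ?_) ?_
        · rw [← hN]; ring
        · rintro ⟨h1, _⟩
          have h2 := dvd_sub hdvd h1
          have heq : ⌊y⌋ - (⌊y⌋ - 1) = 1 := by ring
          rw [heq] at h2
          exact hone h2
      exact FCFmain p l hp hl x _ hI0 rfl rfl rfl hbc
    · -- y = Nx integer, coprime to p: trivial finite expansion with n = 0
      left
      refine ⟨0, ⟨⌊y⌋, fun _ => 1, fun _ => 1,
        fun i => if i = 0 then 1 else ⌊y⌋,
        fun i => if i = 0 then 0 else ((p ^ l : ℕ) : ℤ), ?_,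
        by simp, by simp, by simp, by simp,
        fun i h1 h2 => absurd h2 (by omega), fun i h1 h2 => absurd h2 (by omega),
        fun i h1 h2 => absurd h2 (by omega), fun i h1 h2 => absurd h2 (by omega),
        fun i h1 h2 => absurd h2 (by omega), fun i h1 h2 => absurd h2 (by omega),
        fun i h1 h2 => absurd h2 (by omega)⟩, ?_⟩
      · refine isCoprime_of_det p hp l _ _ 1 0 (Or.inl ?_) ?_
        · rw [← hN]; ring
        · rintro ⟨h1, _⟩; exact hdvd h1
      · show ((if (1:ℕ) = 0 then (1:ℤ) else ⌊y⌋ : ℤ) : ℝ)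
            / ((if (1:ℕ) = 0 then (0:ℤ) else ((p ^ l : ℕ) : ℤ) : ℤ) : ℝ) = x
        rw [if_neg one_ne_zero, if_neg one_ne_zero]
        have hNr : (0 : ℝ) < (((p ^ l : ℕ) : ℤ) : ℝ) := by exact_mod_cast hN1z
        rw [div_eq_iff (ne_of_gt hNr)]
        push_cast
        push_cast at hy
        linear_combination hyint + hy
  · have hfl : (⌊y⌋ : ℝ) < y := lt_of_le_of_ne (Int.floor_le _) hyint
    have hfu : y < (⌊y⌋ : ℝ) + 1 := Int.lt_floor_add_one _
    by_cases hdvd : (p : ℤ) ∣ ⌊y⌋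
    · -- b = ⌊y⌋ + 1, ε₁ = -1
      have hI0 : FCFInv p (p ^ l) x
          ⟨1, ⌊y⌋ + 1, 0, ((p ^ l : ℕ) : ℤ), -1, 1, 1 / ((⌊y⌋ : ℝ) + 1 - y), 0⟩ := by
        refine { hqm0 := le_refl 0, hqmc := by show (0:ℤ) ≤ ((p ^ l : ℕ) : ℤ); omega, hqc1 := hN1z, he := Or.inr rfl,
                 hstrict := ?_, hdet := ?_, hgood := ?_, hdiv := ?_, hval := ?_,
                 ht := ?_, htc := ?_, hm := Or.inl rfl }
        · intro _; show (0:ℤ) < ((p ^ l : ℕ) : ℤ); omega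
        · left; show (1 : ℤ) * ((p ^ l : ℕ) : ℤ) - (⌊y⌋ + 1) * 0 = ((p ^ l : ℕ) : ℤ); ring
        · rintro ⟨h1, _⟩
          have h2 := dvd_sub h1 hdvd
          have heq : ⌊y⌋ + 1 - ⌊y⌋ = 1 := by ring
          rw [heq] at h2
          exact hone h2
        · intro _
          constructor
          · show (p : ℤ) ∣ (⌊y⌋ + 1 + (-1) * 1)
            have heq : ⌊y⌋ + 1 + (-1) * 1 = ⌊y⌋ := by ring
            rw [heq]; exact hdvd
          · show (p : ℤ) ∣ (((p ^ l : ℕ) : ℤ) + (-1) * 0)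
            have heq : ((p ^ l : ℕ) : ℤ) + (-1) * 0 = ((p ^ l : ℕ) : ℤ) := by ring
            rw [heq]; exact hpdvdN
        · show x * ((1 / ((⌊y⌋ : ℝ) + 1 - y)) * (((p ^ l : ℕ) : ℤ) : ℝ)
              + ((-1 : ℤ) : ℝ) * ((0 : ℤ) : ℝ))
            = (1 / ((⌊y⌋ : ℝ) + 1 - y)) * ((⌊y⌋ + 1 : ℤ) : ℝ) + ((-1 : ℤ) : ℝ) * ((1 : ℤ) : ℝ)
          have hne : (⌊y⌋ : ℝ) + 1 - y ≠ 0 := ne_of_gt (by linarith)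
          have hu : (1 / ((⌊y⌋ : ℝ) + 1 - y)) * ((⌊y⌋ : ℝ) + 1 - y) = 1 :=
            one_div_mul_cancel hne
          push_cast
          push_cast at hy
          linear_combination -hu - (1 / ((⌊y⌋ : ℝ) + 1 - y)) * hy
        · intro _
          rw [one_lt_div (by linarith : (0:ℝ) < (⌊y⌋ : ℝ) + 1 - y)]
          linarith
        · intro h0; exact absurd h0 (by norm_num)
      have hbc : IsCoprime ((⌊y⌋ : ℤ) + 1) ((p ^ l : ℕ) : ℤ) := by
        refine isCoprime_of_det p hp l _ _ 1 0 (Or.inl ?_) ?_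
        · rw [← hN]; ring
        · rintro ⟨h1, _⟩
          have h2 := dvd_sub h1 hdvd
          have heq : ⌊y⌋ + 1 - ⌊y⌋ = 1 := by ring
          rw [heq] at h2
          exact hone h2
      exact FCFmain p l hp hl x _ hI0 rfl rfl rfl hbc
    · -- b = ⌊y⌋, ε₁ = 1
      have hI0 : FCFInv p (p ^ l) x
          ⟨1, ⌊y⌋, 0, ((p ^ l : ℕ) : ℤ), 1, 1, 1 / (y - (⌊y⌋ : ℝ)), 0⟩ := by
        refine { hqm0 := le_refl 0, hqmc := by show (0:ℤ) ≤ ((p ^ l : ℕ) : ℤ); omega, hqc1 := hN1z, he := Or.inl rfl,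
                 hstrict := ?_, hdet := ?_, hgood := ?_, hdiv := ?_, hval := ?_,
                 ht := ?_, htc := ?_, hm := Or.inl rfl }
        · intro h; exact absurd h (by norm_num)
        · left; show (1 : ℤ) * ((p ^ l : ℕ) : ℤ) - ⌊y⌋ * 0 = ((p ^ l : ℕ) : ℤ); ring
        · rintro ⟨h1, _⟩; exact hdvd h1
        · rintro (h0 | h0)
          · exact absurd h0 (by norm_num)
          · exact absurd h0 (by norm_num)
        · show x * ((1 / (y - (⌊y⌋ : ℝ))) * (((p ^ l : ℕ) : ℤ) : ℝ)
              + ((1 : ℤ) : ℝ) * ((0 : ℤ) : ℝ))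
            = (1 / (y - (⌊y⌋ : ℝ))) * ((⌊y⌋ : ℤ) : ℝ) + ((1 : ℤ) : ℝ) * ((1 : ℤ) : ℝ)
          have hne : y - (⌊y⌋ : ℝ) ≠ 0 := ne_of_gt (by linarith)
          have hu : (1 / (y - (⌊y⌋ : ℝ))) * (y - (⌊y⌋ : ℝ)) = 1 := one_div_mul_cancel hne
          push_cast
          push_cast at hy
          linear_combination hu - (1 / (y - (⌊y⌋ : ℝ))) * hy
        · intro _
          rw [one_lt_div (by linarith : (0:ℝ) < y - (⌊y⌋ : ℝ))]
          linarith
        · intro h0; exact absurd h0 (by norm_num)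
      have hbc : IsCoprime (⌊y⌋ : ℤ) ((p ^ l : ℕ) : ℤ) := by
        refine isCoprime_of_det p hp l _ _ 1 0 (Or.inl ?_) ?_
        · rw [← hN]; ring
        · rintro ⟨h1, _⟩; exact hdvd h1
      exact FCFmain p l hp hl x _ hI0 rfl rfl rfl hbc
end

section
/- Let a, b, c, d ∈ ℤ with 0 < d < b, gcd(a,b) = 1, gcd(c,d) = 1, and ad − bc = ±1. If x, y ∈ ℤ satisfy 0 < y < b, gcd(x,y) = 1, and ay − bx = ±1, then either (x, y) = (c, d) or (x, y) = (a − c, b − d). -/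
lemma stmt19_aux (a b u v x y : ℤ) (hb : 0 < b) (hab : IsCoprime a b)
    (key : a * (y - v) = b * (x - u)) (hl : -b < y - v) (hr : y - v < b) :
    x = u ∧ y = v := by
  have hdvd : b ∣ (y - v) :=
    hab.symm.dvd_of_dvd_mul_right ⟨x - u, by linear_combination key⟩
  obtain ⟨t, ht⟩ := hdvd
  have ht0 : t = 0 := by nlinarith
  have hyv : y = v := by rw [ht0, mul_zero] at ht; linarith
  refine ⟨?_, hyv⟩
  have : b * (x - u) = 0 := by rw [← key, hyv]; ring
  rcases mul_eq_zero.mp this with h | h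
  · exact absurd h (by linarith)
  · linarith

/-- Let `a, b, c, d ∈ ℤ` with `0 < d < b`, `gcd(a,b) = 1`,
`gcd(c,d) = 1` and `a·d − b·c = ±1`.  If `x, y ∈ ℤ` satisfy `0 < y < b`,
`gcd(x,y) = 1` and `a·y − b·x = ±1`, then `(x, y) = (c, d)` or
`(x, y) = (a − c, b − d)`. -/
theorem stmt19 (a b c d x y : ℤ) (hd : 0 < d) (hdb : d < b)
    (hab : IsCoprime a b) (hcd : IsCoprime c d)
    (h1 : a * d - b * c = 1 ∨ a * d - b * c = -1)
    (hy : 0 < y) (hyb : y < b) (hxy : IsCoprime x y)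
    (h2 : a * y - b * x = 1 ∨ a * y - b * x = -1) :
    (x = c ∧ y = d) ∨ (x = a - c ∧ y = b - d) := by
  have hb : 0 < b := hd.trans hdb
  rcases h1 with h1 | h1 <;> rcases h2 with h2 | h2
  · exact Or.inl (stmt19_aux a b c d x y hb hab (by linear_combination h2 - h1)
      (by linarith) (by linarith))
  · exact Or.inr (stmt19_aux a b (a - c) (b - d) x y hb hab
      (by linear_combination h2 + h1) (by linarith) (by linarith))
  · exact Or.inr (stmt19_aux a b (a - c) (b - d) x y hb hab
      (by linear_combination h2 + h1) (by linarith) (by linarith))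
  · exact Or.inl (stmt19_aux a b c d x y hb hab (by linear_combination h2 - h1)
      (by linarith) (by linarith))
end
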